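/- Let W₀ be a finite group and L a ℤ[W₀]-lattice (free abelian of finite rank as a group) such that every ℚ[W₀]-module endomorphism of ℚ ⊗_ℤ L is multiplication by a rational scalar. If C and C' are ℤ[W₀]-submodules of L of finite index that are isomorphic as ℤ[W₀]-modules, then there exist nonzero integers α and β with α • C = β • C' (as subsets of L). -/

import Mathlib

open scoped TensorProduct

theorem stmt8 (W₀ : Type*) [Group W₀] [Finite W₀]
    (L : Type*) [AddCommGroup L] [DistribMulAction W₀ L]
    [Module.Free ℤ L] [Module.Finite ℤ L] [Nontrivial L]
    (hschur : ∀ f : (ℚ ⊗[ℤ] L) →ₗ[ℚ] (ℚ ⊗[ℤ] L),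
      (∀ g : W₀,
        f ∘ₗ LinearMap.baseChange ℚ ((DistribMulAction.toAddMonoidHom L g).toIntLinearMap)
          = LinearMap.baseChange ℚ ((DistribMulAction.toAddMonoidHom L g).toIntLinearMap) ∘ₗ f) →
      ∃ q : ℚ, f = q • LinearMap.id)
    (C C' : AddSubgroup L)
    (hC : ∀ (g : W₀), ∀ x ∈ C, g • x ∈ C) (hC' : ∀ (g : W₀), ∀ x ∈ C', g • x ∈ C')
    (hCi : C.index ≠ 0) (hC'i : C'.index ≠ 0)
    (e : C ≃+ C')
    (he : ∀ (g : W₀) (x : C), (e ⟨g • (x : L), hC g _ x.2⟩ : L) = g • (e x : L)) :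
    ∃ α β : ℤ, α ≠ 0 ∧ β ≠ 0 ∧
      (fun x : L => α • x) '' (C : Set L) = (fun x : L => β • x) '' (C' : Set L) := by
  set n : ℤ := (C.index : ℤ) with hn_def
  have hn : n ≠ 0 := by rw [hn_def]; exact_mod_cast hCi
  have hmem : ∀ x : L, n • x ∈ C := fun x => by
    rw [hn_def, natCast_zsmul]
    exact AddSubgroup.nsmul_index_mem C x
  -- the ℤ-linear map φ x = e (n • x)
  let φ : L →ₗ[ℤ] L :=
    { toFun := fun x => (e ⟨n • x, hmem x⟩ : L)
      map_add' := by
        intro x y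
        have h1 : (⟨n • (x + y), hmem (x + y)⟩ : C) = ⟨n • x, hmem x⟩ + ⟨n • y, hmem y⟩ := by
          ext; simp [smul_add]
        rw [h1, map_add, AddSubgroup.coe_add]
      map_smul' := by
        intro m x
        have h1 : (⟨n • (m • x), hmem (m • x)⟩ : C) = m • ⟨n • x, hmem x⟩ := by
          ext; simp [smul_comm n m x]
        rw [h1, map_zsmul, AddSubgroup.coe_zsmul]; rfl }
  have hφ : ∀ x : L, φ x = (e ⟨n • x, hmem x⟩ : L) := fun _ => rfl
  have hφinj : ∀ x : L, φ x = 0 → x = 0 := by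
    intro x hx
    rw [hφ] at hx
    have h1 : e ⟨n • x, hmem x⟩ = 0 := by exact_mod_cast hx
    have h2 : (⟨n • x, hmem x⟩ : C) = 0 := by
      apply e.injective; simpa using h1
    have h3 : n • x = 0 := by simpa using congrArg Subtype.val h2
    rcases smul_eq_zero.mp h3 with h | h
    · exact absurd h hn
    · exact h
  -- equivariance
  have hcomm : ∀ g : W₀,
      φ ∘ₗ ((DistribMulAction.toAddMonoidHom L g).toIntLinearMap)
        = ((DistribMulAction.toAddMonoidHom L g).toIntLinearMap) ∘ₗ φ := by
    intro g
    ext x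
    show φ (g • x) = g • φ x
    rw [hφ, hφ]
    have h1 : (⟨n • (g • x), hmem (g • x)⟩ : C) = ⟨g • (n • x), hC g _ (hmem x)⟩ := by
      ext; exact ((DistribMulAction.toAddMonoidHom L g).map_zsmul n x).symm
    rw [h1]
    exact he g ⟨n • x, hmem x⟩
  obtain ⟨q, hq⟩ := hschur (LinearMap.baseChange ℚ φ) (fun g => by
    rw [← LinearMap.baseChange_comp, ← LinearMap.baseChange_comp, hcomm g])
  -- injectivity of x ↦ 1 ⊗ x
  have h0 : ∀ x : L, (1 : ℚ) ⊗ₜ[ℤ] x = 0 → x = 0 := by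
    intro x hx
    let b := Module.Free.chooseBasis ℤ L
    rw [← b.forall_coord_eq_zero_iff]
    intro i
    have h1 : LinearMap.baseChange ℚ (b.coord i) ((1 : ℚ) ⊗ₜ[ℤ] x) = 0 := by
      rw [hx, map_zero]
    rw [LinearMap.baseChange_tmul] at h1
    have h2 : (TensorProduct.rid ℤ ℚ) ((1 : ℚ) ⊗ₜ[ℤ] (b.coord i x)) = 0 := by
      rw [h1, map_zero]
    rw [TensorProduct.rid_tmul] at h2
    have h3 : ((b.coord i x : ℤ) : ℚ) = 0 := by
      simpa using h2
    exact_mod_cast h3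
  -- key integral relation
  have key : ∀ x : L, (q.den : ℤ) • φ x = q.num • x := by
    intro x
    have h1 := LinearMap.congr_fun hq ((1 : ℚ) ⊗ₜ[ℤ] x)
    rw [LinearMap.baseChange_tmul] at h1
    have h2 : (1 : ℚ) ⊗ₜ[ℤ] ((q.den : ℤ) • φ x) = (1 : ℚ) ⊗ₜ[ℤ] (q.num • x) := by
      rw [TensorProduct.tmul_smul, TensorProduct.tmul_smul, h1]
      rw [← Int.cast_smul_eq_zsmul ℚ, ← Int.cast_smul_eq_zsmul ℚ]
      simp only [LinearMap.smul_apply, LinearMap.id_apply]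
      rw [smul_smul]
      congr 1
      push_cast
      rw [mul_comm, Rat.mul_den_eq_num]
    have h3 : (1 : ℚ) ⊗ₜ[ℤ] ((q.den : ℤ) • φ x - q.num • x) = 0 := by
      rw [TensorProduct.tmul_sub, h2, sub_self]
    exact sub_eq_zero.mp (h0 _ h3)
  have hden : ((q.den : ℤ)) ≠ 0 := by exact_mod_cast q.den_nz
  have hnum : q.num ≠ 0 := by
    intro h
    obtain ⟨x, hx⟩ := exists_ne (0 : L)
    have h1 := key x
    rw [h, zero_smul] at h1
    rcases smul_eq_zero.mp h1 with h2 | h2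
    · exact hden h2
    · exact hx (hφinj x h2)
  refine ⟨q.num, (q.den : ℤ) * n, hnum, mul_ne_zero hden hn, ?_⟩
  ext y
  simp only [Set.mem_image, SetLike.mem_coe]
  constructor
  · rintro ⟨c, hc, rfl⟩
    refine ⟨(e ⟨c, hc⟩ : L), (e ⟨c, hc⟩).2, ?_⟩
    have h1 := key c
    have h2 : (⟨n • c, hmem c⟩ : C) = n • (⟨c, hc⟩ : C) := by ext; rfl
    rw [hφ, h2, map_zsmul] at h1
    have h3 : ((n • e ⟨c, hc⟩ : C') : L) = n • (e ⟨c, hc⟩ : L) := rfl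
    rw [h3, smul_smul] at h1
    exact h1
  · rintro ⟨c', hc', rfl⟩
    refine ⟨((e.symm ⟨c', hc'⟩ : C) : L), (e.symm ⟨c', hc'⟩).2, ?_⟩
    have h1 := key ((e.symm ⟨c', hc'⟩ : C) : L)
    have h2 : (⟨n • ((e.symm ⟨c', hc'⟩ : C) : L), hmem _⟩ : C) = n • (e.symm ⟨c', hc'⟩) := by
      ext; rfl
    rw [hφ, h2, map_zsmul, e.apply_symm_apply] at h1
    have h3 : ((n • (⟨c', hc'⟩ : C') : C') : L) = n • c' := rfl
    rw [h3, smul_smul] at h1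
    exact h1.symm
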